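/- Let a, b be complex numbers such that (2b)_k ≠ 0, (b)_k ≠ 0, and (2b)_{2n} ≠ 0 for the relevant indices, and let k be a nonnegative integer. Then (2a)_k / (2b)_k = (k! / (b)_k) · Σ_{n=0}^{⌊k/2⌋} ((a)_{k−n} · (b)_n · (b−a)_n / ((2b)_{2n} · n! · (k−2n)!)) · (−1)^n, where ⌊x⌋ denotes the floor function. -/

import Mathlib

/-- Pochhammer symbol `(x)_n = x (x+1) ⋯ (x+n-1)`, with `(x)_0 = 1`. -/
noncomputable def poch (x : ℂ) (n : ℕ) : ℂ := ∏ k ∈ Finset.range n, (x + k)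

@[simp] lemma poch_zero (x : ℂ) : poch x 0 = 1 := by simp [poch]

lemma poch_succ (x : ℂ) (n : ℕ) : poch x (n + 1) = poch x n * (x + n) := by
  simp [poch, Finset.prod_range_succ]

lemma poch_succ' (x : ℂ) (n : ℕ) : poch x (n + 1) = x * poch (x + 1) n := by
  induction n with
  | zero => simp [poch_succ]
  | succ n ih => rw [poch_succ, ih, poch_succ]; push_cast; ring

@[simp] lemma poch_one (x : ℂ) : poch x 1 = x := by simp [poch]

lemma poch_add (x : ℂ) (m n : ℕ) : poch x (m + n) = poch x m * poch (x + m) n := by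
  induction n with
  | zero => simp
  | succ n ih =>
      rw [← add_assoc, poch_succ, ih, poch_succ]
      push_cast
      ring

/-- The WZ summand. -/
noncomputable def tt (a b : ℂ) (k n : ℕ) : ℂ :=
  poch a (k - n) * poch b n * poch (b - a) n * poch (2 * b + 2 * n) (k - 2 * n) * (-1) ^ n *
    (k.factorial : ℂ) / ((n.factorial : ℂ) * ((k - 2 * n).factorial : ℂ))

/-- The WZ certificate function. -/
noncomputable def gg (a b : ℂ) (k n : ℕ) : ℂ :=
  -2 * n * (2 * b + 2 * n - 1) * (a + k - n) * poch a (k - n) * poch b n * poch (b - a) n *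
    poch (2 * b + 2 * n) (k - 2 * n) * (-1) ^ n *
    (k.factorial : ℂ) / ((n.factorial : ℂ) * ((k + 1 - 2 * n).factorial : ℂ))

@[simp] lemma gg_zero (a b : ℂ) (k : ℕ) : gg a b k 0 = 0 := by simp [gg]

set_option maxHeartbeats 2000000 in
lemma L1 (a b : ℂ) (n k : ℕ) (h : 2 * n + 2 ≤ k) :
    tt a b (k + 1) n - (2 * a + k) * (b + k) * tt a b k n =
      gg a b k (n + 1) - gg a b k n := by
  obtain ⟨j, rfl⟩ : ∃ j, k = 2 * n + 2 + j := ⟨k - (2 * n + 2), by omega⟩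
  have e1 : 2 * n + 2 + j + 1 - n = n + 1 + j + 1 + 1 := by omega
  have e2 : 2 * n + 2 + j + 1 - 2 * n = j + 1 + 1 + 1 := by omega
  have e3 : 2 * n + 2 + j - n = n + 1 + j + 1 := by omega
  have e4 : 2 * n + 2 + j - 2 * n = j + 1 + 1 := by omega
  have e5 : 2 * n + 2 + j - (n + 1) = n + 1 + j := by omega
  have e6 : 2 * n + 2 + j - 2 * (n + 1) = j := by omega
  have e7 : 2 * n + 2 + j + 1 - 2 * (n + 1) = j + 1 := by omega
  have e8 : 2 * n + 2 + j + 1 = (2 * n + 2 + j) + 1 := by omega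
  simp only [tt, gg, e1, e2, e3, e4, e5, e6, e7]
  rw [e8]
  have hB : poch (2 * b + 2 * (n : ℂ)) (j + 1 + 1)
      = (2 * b + 2 * (n : ℂ)) * ((2 * b + 2 * (n : ℂ) + 1) * poch (2 * b + 2 * (n : ℂ) + 1 + 1) j) := by
    rw [poch_succ', poch_succ']
  have hA : poch (2 * b + 2 * (n : ℂ)) (j + 1 + 1 + 1)
      = (2 * b + 2 * (n : ℂ)) * ((2 * b + 2 * (n : ℂ) + 1) * poch (2 * b + 2 * (n : ℂ) + 1 + 1) j)
        * (2 * b + 2 * (n : ℂ) + ((j : ℂ) + 1 + 1)) := by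
    rw [poch_succ, hB]; push_cast; ring
  have harg : (2 * b + 2 * ((n + 1 : ℕ) : ℂ)) = 2 * b + 2 * (n : ℂ) + 1 + 1 := by
    push_cast; ring
  rw [hA, hB, harg]
  simp only [poch_succ, Nat.factorial_succ]
  have hn : ((n.factorial : ℂ)) ≠ 0 := by exact_mod_cast n.factorial_ne_zero
  have hj : ((j.factorial : ℂ)) ≠ 0 := by exact_mod_cast j.factorial_ne_zero
  have h1 : ((j:ℂ) + 1) ≠ 0 := by exact_mod_cast (Nat.cast_ne_zero (R := ℂ)).mpr (Nat.succ_ne_zero j)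
  have h2 : ((j:ℂ) + 1 + 1) ≠ 0 := by exact_mod_cast (Nat.cast_ne_zero (R := ℂ)).mpr (Nat.succ_ne_zero (j+1))
  have h3 : ((j:ℂ) + 2 + 1) ≠ 0 := by
    have : ((j:ℂ) + 2 + 1) = ((j + 3 : ℕ) : ℂ) := by push_cast; ring
    rw [this]
    exact_mod_cast (Nat.cast_ne_zero (R := ℂ)).mpr (Nat.succ_ne_zero (j+2))
  have h4 : ((n:ℂ) + 1) ≠ 0 := by exact_mod_cast (Nat.cast_ne_zero (R := ℂ)).mpr (Nat.succ_ne_zero n)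
  push_cast
  simp only [pow_succ]
  set A := poch a (n + 1 + j) with hA
  set B := poch b n with hBs
  set C := poch (b - a) n with hCs
  set D := poch (2 * b + 2 * (n:ℂ) + 1 + 1) j with hDs
  set E := ((-1 : ℂ)) ^ n with hEs
  set K := (((2 * n + 2 + j).factorial : ℕ) : ℂ) with hKs
  set N := ((n.factorial : ℕ) : ℂ) with hNs
  set J := ((j.factorial : ℕ) : ℂ) with hJs
  set u := (n : ℂ) with hus
  set v := (j : ℂ) with hvs
  have hs2 : ((u + 1) * (v + 2 + 1)) ≠ 0 := mul_ne_zero h4 h3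
  have hs3 : ((v + 2 + 1) * (v + 1 + 1)) ≠ 0 := mul_ne_zero h3 h2
  rw [← mul_div_assoc]
  rw [← mul_div_mul_left
    (A * (a + (u + 1 + v)) * (a + (u + 1 + v + 1)) * B * C *
        ((2 * b + 2 * u) * ((2 * b + 2 * u + 1) * D) * (2 * b + 2 * u + (v + 1 + 1))) * E *
        ((2 * u + 2 + v + 1) * K))
    (N * ((v + 2 + 1) * ((v + 1 + 1) * ((v + 1) * J)))) h4]
  rw [← mul_div_mul_left
    ((2 * a + (2 * u + 2 + v)) * (b + (2 * u + 2 + v)) *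
        (A * (a + (u + 1 + v)) * B * C * ((2 * b + 2 * u) * ((2 * b + 2 * u + 1) * D)) * E * K))
    (N * ((v + 1 + 1) * ((v + 1) * J))) hs2]
  rw [← mul_div_mul_left
    (-2 * (u + 1) * (2 * b + 2 * u + 1 + 1 - 1) * (a + (2 * u + 2 + v) - (u + 1)) * A *
        (B * (b + u)) * (C * (b - a + u)) * D * (E * -1) * K)
    ((u + 1) * N * ((v + 1) * J)) hs3]
  rw [← mul_div_mul_left
    (-2 * u * (2 * b + 2 * u - 1) * (a + (2 * u + 2 + v) - u) * (A * (a + (u + 1 + v))) * B * C *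
        ((2 * b + 2 * u) * ((2 * b + 2 * u + 1) * D)) * E * K)
    (N * ((v + 2 + 1) * ((v + 1 + 1) * ((v + 1) * J)))) h4]
  rw [show ((u + 1) * (v + 2 + 1)) * (N * ((v + 1 + 1) * ((v + 1) * J)))
      = (u + 1) * (N * ((v + 2 + 1) * ((v + 1 + 1) * ((v + 1) * J)))) from by ring]
  rw [show ((v + 2 + 1) * (v + 1 + 1)) * ((u + 1) * N * ((v + 1) * J))
      = (u + 1) * (N * ((v + 2 + 1) * ((v + 1 + 1) * ((v + 1) * J)))) from by ring]
  rw [div_sub_div_same, div_sub_div_same]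
  congr 1
  ring


lemma L2 (a b : ℂ) (m : ℕ) :
    tt a b (m + m + 1) m - (2 * a + (m + m : ℕ)) * (b + (m + m : ℕ)) * tt a b (m + m) m =
      -gg a b (m + m) m := by
  have e1 : m + m + 1 - m = m + 1 := by omega
  have e2 : m + m + 1 - 2 * m = 1 := by omega
  have e3 : m + m - m = m := by omega
  have e4 : m + m - 2 * m = 0 := by omega
  have e6 : m + m + 1 = (m + m) + 1 := by omega
  simp only [tt, gg, e1, e2, e3, e4]
  rw [e6]
  simp only [poch_succ, poch_zero, poch_one, Nat.factorial_succ, Nat.factorial_one,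
    Nat.factorial_zero]
  have hm : ((m.factorial : ℂ)) ≠ 0 := by exact_mod_cast m.factorial_ne_zero
  push_cast
  field_simp
  ring

lemma L3 (a b : ℂ) (m : ℕ) :
    tt a b (2 * m + 2) m - (2 * a + (2 * m + 1 : ℕ)) * (b + (2 * m + 1 : ℕ)) * tt a b (2 * m + 1) m
      + tt a b (2 * m + 2) (m + 1) =
      -gg a b (2 * m + 1) m := by
  have e1 : 2 * m + 2 - m = m + 1 + 1 := by omega
  have e2 : 2 * m + 2 - 2 * m = 1 + 1 := by omega
  have e3 : 2 * m + 1 - m = m + 1 := by omega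
  have e4 : 2 * m + 1 - 2 * m = 1 := by omega
  have e5 : 2 * m + 2 - (m + 1) = m + 1 := by omega
  have e6 : 2 * m + 2 - 2 * (m + 1) = 0 := by omega
  have e7 : 2 * m + 1 + 1 - 2 * m = 1 + 1 := by omega
  have e8 : 2 * m + 2 = (2 * m + 1) + 1 := by omega
  simp only [tt, gg, e1, e2, e3, e4, e5, e6, e7]
  rw [e8]
  simp only [poch_succ, poch_zero, poch_one, Nat.factorial_succ, Nat.factorial_one,
    Nat.factorial_zero]
  have hm : ((m.factorial : ℂ)) ≠ 0 := by exact_mod_cast m.factorial_ne_zero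
  have hm1 : ((m:ℂ) + 1) ≠ 0 := by
    exact_mod_cast (Nat.cast_ne_zero (R := ℂ)).mpr (Nat.succ_ne_zero m)
  push_cast
  field_simp [hm1]
  ring

lemma Srec (a b : ℂ) (k : ℕ) :
    ∑ n ∈ Finset.range ((k + 1) / 2 + 1), tt a b (k + 1) n =
      (2 * a + k) * (b + k) * ∑ n ∈ Finset.range (k / 2 + 1), tt a b k n := by
  rcases Nat.even_or_odd k with ⟨m, hm⟩ | ⟨m, hm⟩
  · subst hm
    have r1 : (m + m + 1) / 2 + 1 = m + 1 := by omega
    have r2 : (m + m) / 2 + 1 = m + 1 := by omega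
    rw [r1, r2, Finset.mul_sum, ← sub_eq_zero, ← Finset.sum_sub_distrib,
      Finset.sum_range_succ]
    have htel : ∑ n ∈ Finset.range m,
        (tt a b (m + m + 1) n - (2 * a + ((m + m : ℕ) : ℂ)) * (b + ((m + m : ℕ) : ℂ)) * tt a b (m + m) n)
        = gg a b (m + m) m - gg a b (m + m) 0 := by
      rw [← Finset.sum_range_sub (fun i => gg a b (m + m) i) m]
      apply Finset.sum_congr rfl
      intro n hn
      exact L1 a b n (m + m) (by have := Finset.mem_range.mp hn; omega)
    rw [htel, L2 a b m, gg_zero]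
    ring
  · subst hm
    have r1 : (2 * m + 1 + 1) / 2 + 1 = m + 2 := by omega
    have r2 : (2 * m + 1) / 2 + 1 = m + 1 := by omega
    rw [r1, r2, Finset.mul_sum, ← sub_eq_zero, Finset.sum_range_succ, Finset.sum_range_succ,
      Finset.sum_range_succ]
    have htel : ∑ n ∈ Finset.range m,
        (tt a b (2 * m + 1 + 1) n - (2 * a + ((2 * m + 1 : ℕ) : ℂ)) * (b + ((2 * m + 1 : ℕ) : ℂ)) * tt a b (2 * m + 1) n)
        = gg a b (2 * m + 1) m - gg a b (2 * m + 1) 0 := by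
      rw [← Finset.sum_range_sub (fun i => gg a b (2 * m + 1) i) m]
      apply Finset.sum_congr rfl
      intro n hn
      exact L1 a b n (2 * m + 1) (by have := Finset.mem_range.mp hn; omega)
    rw [Finset.sum_sub_distrib, gg_zero, sub_zero] at htel
    have hL3 := L3 a b m
    have h2m2 : 2 * m + 1 + 1 = 2 * m + 2 := by omega
    rw [h2m2] at htel ⊢
    linear_combination htel + hL3

lemma key (a b : ℂ) (k : ℕ) :
    ∑ n ∈ Finset.range (k / 2 + 1), tt a b k n = poch (2 * a) k * poch b k := by
  induction k with
  | zero => simp [tt]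
  | succ k ih =>
      rw [Srec, ih, poch_succ, poch_succ]
      ring

theorem poch_sum_identity (a b : ℂ) (k : ℕ)
    (h2b : poch (2 * b) k ≠ 0) (hb : poch b k ≠ 0)
    (h2b2n : ∀ n ≤ k / 2, poch (2 * b) (2 * n) ≠ 0) :
    poch (2 * a) k / poch (2 * b) k =
      (k.factorial : ℂ) / poch b k *
        ∑ n ∈ Finset.range (k / 2 + 1),
          poch a (k - n) * poch b n * poch (b - a) n /
            (poch (2 * b) (2 * n) * n.factorial * (k - 2 * n).factorial) * (-1 : ℂ) ^ n := by
  have hk : ((k.factorial : ℂ)) ≠ 0 := by exact_mod_cast k.factorial_ne_zero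
  have hterm : ∀ n ∈ Finset.range (k / 2 + 1),
      poch a (k - n) * poch b n * poch (b - a) n /
        (poch (2 * b) (2 * n) * n.factorial * (k - 2 * n).factorial) * (-1 : ℂ) ^ n *
        (poch (2 * b) k * (k.factorial : ℂ)) = tt a b k n := by
    intro n hn
    have hn' : n ≤ k / 2 := by have := Finset.mem_range.mp hn; omega
    have h2n : 2 * n ≤ k := by omega
    have hsplit : poch (2 * b) k = poch (2 * b) (2 * n) * poch (2 * b + 2 * n) (k - 2 * n) := by
      conv_lhs => rw [show k = 2 * n + (k - 2 * n) by omega]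
      rw [poch_add]
      congr 2
      push_cast
      ring
    have h1 : poch (2 * b) (2 * n) ≠ 0 := h2b2n n hn'
    have h2 : ((n.factorial : ℂ)) ≠ 0 := by exact_mod_cast n.factorial_ne_zero
    have h3 : (((k - 2 * n).factorial : ℂ)) ≠ 0 := by exact_mod_cast (k - 2 * n).factorial_ne_zero
    rw [hsplit, tt]
    field_simp
    linear_combination (poch a (k - n) * poch b n * poch (b - a) n * poch (2 * (b + n)) (k - 2 * n)) * mul_inv_cancel₀ (show poch (b * 2) (2 * n) ≠ 0 by rwa [mul_comm b 2])
  have hsum : (∑ n ∈ Finset.range (k / 2 + 1),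
      poch a (k - n) * poch b n * poch (b - a) n /
        (poch (2 * b) (2 * n) * n.factorial * (k - 2 * n).factorial) * (-1 : ℂ) ^ n) *
      (poch (2 * b) k * (k.factorial : ℂ)) = poch (2 * a) k * poch b k := by
    rw [Finset.sum_mul, Finset.sum_congr rfl hterm, key]
  have hS : (∑ n ∈ Finset.range (k / 2 + 1),
      poch a (k - n) * poch b n * poch (b - a) n /
        (poch (2 * b) (2 * n) * n.factorial * (k - 2 * n).factorial) * (-1 : ℂ) ^ n) =
      poch (2 * a) k * poch b k / (poch (2 * b) k * (k.factorial : ℂ)) := by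
    rw [eq_div_iff (mul_ne_zero h2b hk)]
    exact hsum
  rw [hS]
  field_simp
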